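/- Let A be a real m×n matrix with m ≥ n and full column rank (rank A = n), so that AᵀA is invertible, and let B = (AᵀA)⁻¹Aᵀ be its pseudo-inverse. Let Z be an m×m and N an n×n real matrix. Then rank(N·B − B·Z) ≤ rank(Z·A − A·N) + 2·rank(N·Aᵀ − Aᵀ·Z). In displacement notation: δ^Δ_{N,Z}{B} ≤ δ^Δ_{Z,N}{A} + 2·δ^Δ_{N,Z}{Aᵀ}. -/
import Mathlib


open Matrix

lemma matrix_rank_add_le {k l : ℕ} (A B : Matrix (Fin k) (Fin l) ℝ) :
    (A + B).rank ≤ A.rank + B.rank := by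
  rw [Matrix.rank, Matrix.rank, Matrix.rank, mulVecLin_add]
  calc Module.finrank ℝ (LinearMap.range (A.mulVecLin + B.mulVecLin))
      ≤ Module.finrank ℝ (LinearMap.range A.mulVecLin ⊔ LinearMap.range B.mulVecLin : Submodule ℝ (Fin k → ℝ)) := by
        apply Submodule.finrank_mono
        intro x hx
        obtain ⟨y, rfl⟩ := hx
        exact Submodule.add_mem_sup (LinearMap.mem_range_self _ y) (LinearMap.mem_range_self _ y)
    _ ≤ _ := (Submodule.finrank_add_le_finrank_add_finrank _ _)

lemma matrix_rank_neg {k l : ℕ} (B : Matrix (Fin k) (Fin l) ℝ) :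
    (-B).rank = B.rank := by
  have h : (-B).mulVecLin = -B.mulVecLin := by
    ext x
    simp [Matrix.mulVecLin, Matrix.neg_mulVec]
  rw [Matrix.rank, h, LinearMap.range_neg, ← Matrix.rank]

lemma matrix_rank_sub_le {k l : ℕ} (A B : Matrix (Fin k) (Fin l) ℝ) :
    (A - B).rank ≤ A.rank + B.rank := by
  have := matrix_rank_add_le A (-B)
  rw [matrix_rank_neg] at this
  simpa [sub_eq_add_neg] using this

theorem pseudoinverse_delta_displacement (m n : ℕ) (hmn : n ≤ m)
    (A : Matrix (Fin m) (Fin n) ℝ) (hA : A.rank = n)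
    (Z : Matrix (Fin m) (Fin m) ℝ) (N : Matrix (Fin n) (Fin n) ℝ) :
    (N * ((Aᵀ * A)⁻¹ * Aᵀ) - ((Aᵀ * A)⁻¹ * Aᵀ) * Z).rank
      ≤ (Z * A - A * N).rank + 2 * (N * Aᵀ - Aᵀ * Z).rank := by
  set G := Aᵀ * A with hGdef
  -- G is invertible
  have hGrank : G.rank = n := by rw [hGdef, rank_transpose_mul_self, hA]
  have hGunit : IsUnit G := by
    rw [← Matrix.mulVec_surjective_iff_isUnit]
    have htop : LinearMap.range G.mulVecLin = ⊤ := by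
      apply Submodule.eq_top_of_finrank_eq
      rw [← Matrix.rank, hGrank, Module.finrank_fin_fun]
    intro v
    have : v ∈ LinearMap.range G.mulVecLin := htop ▸ Submodule.mem_top
    obtain ⟨y, hy⟩ := this
    exact ⟨y, hy⟩
  have hGdet : IsUnit G.det := (Matrix.isUnit_iff_isUnit_det G).mp hGunit
  have h1 : G * G⁻¹ = 1 := Matrix.mul_nonsing_inv _ hGdet
  have h2 : G⁻¹ * G = 1 := Matrix.nonsing_inv_mul _ hGdet
  set D1 := Z * A - A * N with hD1
  set D2 := N * Aᵀ - Aᵀ * Z with hD2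
  -- key identity
  have hmid : D2 * A + Aᵀ * D1 = N * G - G * N := by
    rw [hD1, hD2, hGdef]
    simp only [Matrix.sub_mul, Matrix.mul_sub, Matrix.mul_assoc]
    abel
  have hcomm : G⁻¹ * (N * G - G * N) * G⁻¹ = G⁻¹ * N - N * G⁻¹ := by
    rw [mul_sub, sub_mul,
      show G⁻¹ * (N * G) * G⁻¹ = G⁻¹ * N * (G * G⁻¹) by noncomm_ring,
      show G⁻¹ * (G * N) * G⁻¹ = (G⁻¹ * G) * (N * G⁻¹) by noncomm_ring, h1, h2]
    simp
  have key : N * (G⁻¹ * Aᵀ) - (G⁻¹ * Aᵀ) * Z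
      = G⁻¹ * D2 - (G⁻¹ * (D2 * A + Aᵀ * D1) * G⁻¹) * Aᵀ := by
    rw [hmid, hcomm, hD2]
    simp only [Matrix.sub_mul, Matrix.mul_sub, Matrix.mul_assoc]
    abel
  rw [key]
  calc (G⁻¹ * D2 - (G⁻¹ * (D2 * A + Aᵀ * D1) * G⁻¹) * Aᵀ).rank
      ≤ (G⁻¹ * D2).rank + ((G⁻¹ * (D2 * A + Aᵀ * D1) * G⁻¹) * Aᵀ).rank :=
        matrix_rank_sub_le _ _
    _ ≤ D2.rank + (D2 * A + Aᵀ * D1).rank := by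
        gcongr
        · exact Matrix.rank_mul_le_right _ _
        · calc ((G⁻¹ * (D2 * A + Aᵀ * D1) * G⁻¹) * Aᵀ).rank
              ≤ (G⁻¹ * (D2 * A + Aᵀ * D1) * G⁻¹).rank := Matrix.rank_mul_le_left _ _
            _ ≤ (G⁻¹ * (D2 * A + Aᵀ * D1)).rank := Matrix.rank_mul_le_left _ _
            _ ≤ (D2 * A + Aᵀ * D1).rank := Matrix.rank_mul_le_right _ _
    _ ≤ D2.rank + ((D2 * A).rank + (Aᵀ * D1).rank) := by
        gcongr
        exact matrix_rank_add_le _ _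
    _ ≤ D2.rank + (D2.rank + D1.rank) := by
        gcongr
        · exact Matrix.rank_mul_le_left _ _
        · exact Matrix.rank_mul_le_right _ _
    _ = D1.rank + 2 * D2.rank := by ring
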